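/- Suppose f, g are polymorphisms of a relational structure on A such that for every x,y ∈ A either f restricted to {x,y} is a semilattice operation and g(x,y,z) = f(f(x,y),z) on {x,y} (the 'red' case), or f(x,y) = x on {x,y} and g restricted to {x,y} is a majority operation (the 'yellow' case). Then u(x,y,z) = g(f(f(x,y),z), f(f(y,z),x), f(f(z,x),y)) satisfies u(x,x,y) = u(x,y,x) = u(y,x,x) for all x, y ∈ A, i.e., u is a ternary weak near-unanimity operation. -/
import Mathlib


/-- The pair `{x,y}` is red: `f` restricted to `{x,y}` is a semilattice operation
(in particular `{x,y}` is closed under `f`) and `g(p,q,r) = f(f(p,q),r)` on `{x,y}`. -/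
def RedPair {A : Type*} (f : A → A → A) (g : A → A → A → A) (x y : A) : Prop :=
  (∀ p ∈ ({x, y} : Set A), ∀ q ∈ ({x, y} : Set A), f p q ∈ ({x, y} : Set A)) ∧
  (∀ p ∈ ({x, y} : Set A), ∀ q ∈ ({x, y} : Set A), ∀ r ∈ ({x, y} : Set A),
    f (f p q) r = f p (f q r)) ∧
  (∀ p ∈ ({x, y} : Set A), ∀ q ∈ ({x, y} : Set A), f p q = f q p) ∧
  (∀ p ∈ ({x, y} : Set A), f p p = p) ∧
  (∀ p ∈ ({x, y} : Set A), ∀ q ∈ ({x, y} : Set A), ∀ r ∈ ({x, y} : Set A),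
    g p q r = f (f p q) r)

/-- The pair `{x,y}` is yellow: `f` is the first projection on `{x,y}` and `g`
restricted to `{x,y}` is a majority operation. -/
def YellowPair {A : Type*} (f : A → A → A) (g : A → A → A → A) (x y : A) : Prop :=
  (∀ p ∈ ({x, y} : Set A), ∀ q ∈ ({x, y} : Set A), f p q = p) ∧
  (∀ p ∈ ({x, y} : Set A), ∀ q ∈ ({x, y} : Set A),
    g p p q = p ∧ g p q p = p ∧ g q p p = p)

/-- If every pair `{x,y}` is red or yellow, then
`u(x,y,z) = g(f(f(x,y),z), f(f(y,z),x), f(f(z,x),y))` is a ternary weak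
near-unanimity operation: it is idempotent and `u(x,x,y) = u(x,y,x) = u(y,x,x)`. -/
theorem stmt6 {A : Type*} (f : A → A → A) (g : A → A → A → A)
    (hcolor : ∀ x y : A, RedPair f g x y ∨ YellowPair f g x y)
    (u : A → A → A → A)
    (hu : ∀ x y z : A, u x y z = g (f (f x y) z) (f (f y z) x) (f (f z x) y)) :
    (∀ x : A, u x x x = x) ∧
    (∀ x y : A, u x x y = u x y x ∧ u x y x = u y x x) := by
  have hx : ∀ x y : A, x ∈ ({x, y} : Set A) := fun x y => Set.mem_insert _ _
  have hy : ∀ x y : A, y ∈ ({x, y} : Set A) := fun x y => Set.mem_insert_of_mem _ rfl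
  constructor
  · intro x
    rw [hu]
    rcases hcolor x x with ⟨hcl, hass, hcomm, hid, hg⟩ | ⟨hf, hg⟩
    · simp only [hid x (hx x x)]
      rw [hg x (hx x x) x (hx x x) x (hx x x)]
      simp only [hid x (hx x x)]
    · simp only [hf x (hx x x) x (hx x x)]
      exact (hg x (hx x x) x (hx x x)).1
  · intro x y
    rcases hcolor x y with ⟨hcl, hass, hcomm, hid, hg⟩ | ⟨hf, hg⟩
    · have hxm := hx x y
      have hym := hy x y
      have hsm : f x y ∈ ({x, y} : Set A) := hcl x hxm y hym
      have hyx : f y x = f x y := hcomm y hym x hxm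
      have hsx : f (f x y) x = f x y := by
        rw [hcomm (f x y) hsm x hxm, ← hass x hxm x hxm y hym, hid x hxm]
      have hsy : f (f x y) y = f x y := by
        rw [hass x hxm y hym y hym, hid y hym]
      constructor
      · simp only [hu, hid x hxm, hyx, hsx, hsy]
      · simp only [hu, hid x hxm, hyx, hsx, hsy]
    · have hxm := hx x y
      have hym := hy x y
      have h1 : f x x = x := hf x hxm x hxm
      have h2 : f x y = x := hf x hxm y hym
      have h3 : f y x = y := hf y hym x hxm
      constructor
      · simp only [hu, h1, h2, h3]
        rw [(hg x hxm y hym).1, (hg x hxm y hym).2.1]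
      · simp only [hu, h1, h2, h3]
        rw [(hg x hxm y hym).2.1, (hg x hxm y hym).2.2]
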